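/- Let G be a graph with at least one edge and let x ∈ R^n with ‖x‖_1 = 1 maximize F_G(x) = ∑_{ij∈E}(x_i - x_j)^2 over the unit ℓ¹-sphere. Then at most one entry of x is positive or at most one entry of x is negative (i.e., min(|{i : x_i > 0}|, |{i : x_i < 0}|) ≤ 1). -/

import Mathlib

open scoped Classical
open Finset

/-- The `p`-norm of a vector. -/
noncomputable def pNorm {V : Type*} [Fintype V] (p : ℝ) (x : V → ℝ) : ℝ :=
  (∑ i, |x i| ^ p) ^ (1 / p)

/-- The sup-norm of a vector. -/
noncomputable def supNorm {V : Type*} [Fintype V] (x : V → ℝ) : ℝ :=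
  ⨆ i, |x i|

/-- The Laplacian quadratic form `∑_{ij ∈ E} (x_i - x_j)^2` of a graph. -/
noncomputable def quadForm {V : Type*} [Fintype V] (G : SimpleGraph V) (x : V → ℝ) : ℝ :=
  (∑ i, ∑ j, if G.Adj i j then (x i - x j) ^ 2 else 0) / 2

/-- The `p`-spectral radius of the Laplacian: `μ⁽ᵖ⁾(G) = max_{‖x‖ₚ = 1} xᵀLx`. -/
noncomputable def mu {V : Type*} [Fintype V] (G : SimpleGraph V) (p : ℝ) : ℝ :=
  sSup {y | ∃ x : V → ℝ, pNorm p x = 1 ∧ quadForm G x = y}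

/-- `μ⁽^∞⁾(G) = max_{‖x‖_∞ = 1} xᵀLx`. -/
noncomputable def muInf {V : Type*} [Fintype V] (G : SimpleGraph V) : ℝ :=
  sSup {y | ∃ x : V → ℝ, supNorm x = 1 ∧ quadForm G x = y}

lemma pNorm_one_eq {V : Type*} [Fintype V] (x : V → ℝ) : pNorm 1 x = ∑ i, |x i| := by
  simp [pNorm]

lemma quadForm_nonneg {V : Type*} [Fintype V] (G : SimpleGraph V) (x : V → ℝ) :
    0 ≤ quadForm G x := by
  apply div_nonneg _ (by norm_num)
  refine Finset.sum_nonneg fun i _ => Finset.sum_nonneg fun j _ => ?_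
  split <;> positivity

lemma quadForm_neg {V : Type*} [Fintype V] (G : SimpleGraph V) (x : V → ℝ) :
    quadForm G (-x) = quadForm G x := by
  unfold quadForm
  congr 1
  refine Finset.sum_congr rfl fun i _ => Finset.sum_congr rfl fun j _ => ?_
  split
  · simp only [Pi.neg_apply]; ring
  · rfl

lemma quad_para {V : Type*} [Fintype V] (G : SimpleGraph V) (x z : V → ℝ) (t : ℝ) :
    quadForm G (x + t • z) + quadForm G (x + (-t) • z)
      = 2 * quadForm G x + 2 * t ^ 2 * quadForm G z := by
  unfold quadForm
  have h : ∀ i j : V, (if G.Adj i j then ((x + t • z) i - (x + t • z) j) ^ 2 else 0)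
      + (if G.Adj i j then ((x + (-t) • z) i - (x + (-t) • z) j) ^ 2 else 0)
      = 2 * (if G.Adj i j then (x i - x j) ^ 2 else 0)
        + 2 * t ^ 2 * (if G.Adj i j then (z i - z j) ^ 2 else 0) := by
    intro i j
    by_cases hij : G.Adj i j <;>
      simp only [hij, if_true, if_false, Pi.add_apply, Pi.smul_apply, smul_eq_mul] <;> ring
  rw [← add_div]
  rw [← Finset.sum_add_distrib]
  simp_rw [← Finset.sum_add_distrib, h, Finset.sum_add_distrib, ← Finset.mul_sum]
  ring

lemma isolated_of_two_pos {n : ℕ} (G : SimpleGraph (Fin n)) (x : Fin n → ℝ)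
    (hx : pNorm 1 x = 1)
    (hmax : ∀ y : Fin n → ℝ, pNorm 1 y = 1 → quadForm G y ≤ quadForm G x)
    (u v : Fin n) (huv : u ≠ v) (hu : 0 < x u) (hv : 0 < x v) :
    ∀ j, ¬ G.Adj u j := by
  set z : Fin n → ℝ := fun i => if i = u then 1 else if i = v then -1 else 0 with hz
  have hzu : z u = 1 := by simp [hz]
  have hzsum : ∑ i, z i = 0 := by
    have : z = (fun i => (if i = u then (1:ℝ) else 0) + (if i = v then -1 else 0)) := by
      funext i
      by_cases h1 : i = u
      · subst h1; simp [hz, huv]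
      · by_cases h2 : i = v
        · have hvu : v ≠ u := Ne.symm huv
          simp [hz, h2, hvu]
        · simp [hz, h1, h2]
    rw [this, Finset.sum_add_distrib]
    simp
  have hnorm : ∀ s : ℝ, |s| < x u → |s| < x v → pNorm 1 (x + s • z) = 1 := by
    intro s hsu hsv
    rw [pNorm_one_eq]
    have habs : ∀ i, |(x + s • z) i| = |x i| + s * z i := by
      intro i
      simp only [Pi.add_apply, Pi.smul_apply, smul_eq_mul]
      by_cases h1 : i = u
      · subst h1
        rw [hzu, mul_one, abs_of_pos hu, abs_of_pos]
        linarith [neg_abs_le s, le_abs_self s]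
      · by_cases h2 : i = v
        · subst h2
          have : z i = -1 := by simp [hz, h1]
          rw [this, abs_of_pos hv]
          rw [show x i + s * (-1) = x i - s by ring]
          rw [abs_of_pos (by linarith [neg_abs_le s, le_abs_self s])]
          try ring
        · have : z i = 0 := by simp [hz, h1, h2]
          rw [this]; ring_nf
    simp_rw [habs]
    rw [Finset.sum_add_distrib, ← Finset.mul_sum, hzsum, mul_zero, add_zero,
      ← pNorm_one_eq, hx]
  set t : ℝ := min (x u) (x v) / 2 with ht
  have htu : |t| < x u := by
    rw [abs_of_pos (by positivity)]
    have := min_le_left (x u) (x v); have := min_le_right (x u) (x v)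
    simp only [ht]; cases' min_cases (x u) (x v) with h h <;> rw [h.1] <;> linarith
  have htv : |t| < x v := by
    rw [abs_of_pos (by positivity)]
    cases' min_cases (x u) (x v) with h h <;> simp only [ht] <;> rw [h.1] <;> linarith
  have h1 := hmax _ (hnorm t htu htv)
  have h2 := hmax _ (hnorm (-t) (by rwa [abs_neg]) (by rwa [abs_neg]))
  have hpar := quad_para G x z t
  have ht0 : 0 < t := by
    rw [ht]; exact div_pos (lt_min hu hv) two_pos
  have ht2 : 0 < t ^ 2 := by positivity
  have hqz : quadForm G z ≤ 0 := by
    by_contra hq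
    push_neg at hq
    nlinarith [mul_pos ht2 hq]
  have hqz0 : quadForm G z = 0 := le_antisymm hqz (quadForm_nonneg G z)
  intro j hadj
  have hterm : ∀ i k : Fin n, 0 ≤ (if G.Adj i k then (z i - z k) ^ 2 else 0) := by
    intro i k; split <;> positivity
  have hall : ∀ i ∈ univ, ∀ k ∈ univ, (if G.Adj i k then (z i - z k) ^ 2 else 0) = 0 := by
    have hsum0 : ∑ i, ∑ k, (if G.Adj i k then (z i - z k) ^ 2 else 0) = 0 := by
      have := hqz0; unfold quadForm at this; linarith
    intro i hi k hk
    have h1 := (Finset.sum_eq_zero_iff_of_nonneg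
      (fun i _ => Finset.sum_nonneg fun k _ => hterm i k)).mp hsum0 i hi
    exact (Finset.sum_eq_zero_iff_of_nonneg (fun k _ => hterm i k)).mp h1 k hk
  have := hall u (mem_univ u) j (mem_univ j)
  rw [if_pos hadj] at this
  have hzj : z u = z j := by nlinarith [sq_nonneg (z u - z j)]
  have hju : j ≠ u := fun h => G.loopless.irrefl u (h ▸ hadj)
  rw [hzu] at hzj
  by_cases h2 : j = v
  · subst h2; simp [hz, hju] at hzj; linarith
  · simp [hz, hju, h2] at hzj

theorem l1_maximizer_sign_pattern {n : ℕ} (G : SimpleGraph (Fin n))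
    (hE : ∃ a b, G.Adj a b) (x : Fin n → ℝ) (hx : pNorm 1 x = 1)
    (hmax : ∀ y : Fin n → ℝ, pNorm 1 y = 1 → quadForm G y ≤ quadForm G x) :
    min ((univ.filter fun i => 0 < x i).card) ((univ.filter fun i => x i < 0).card) ≤ 1 := by
  by_contra hcon
  push_neg at hcon
  rw [lt_min_iff] at hcon
  obtain ⟨hP, hN⟩ := hcon
  -- hypotheses for -x
  have hxneg : pNorm 1 (-x) = 1 := by
    rw [pNorm_one_eq] at hx ⊢
    simpa using hx
  have hmaxneg : ∀ y : Fin n → ℝ, pNorm 1 y = 1 → quadForm G y ≤ quadForm G (-x) := by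
    intro y hy
    rw [quadForm_neg]
    exact hmax y hy
  -- every vertex with nonzero coordinate is isolated
  have hiso : ∀ i : Fin n, x i ≠ 0 → ∀ j, ¬ G.Adj i j := by
    intro i hi
    rcases hi.lt_or_gt with hneg | hpos
    · -- x i < 0 : use -x, pair i with another negative vertex
      have hiN : i ∈ univ.filter fun k => x k < 0 := by simp [hneg]
      obtain ⟨w, hwN, hwi⟩ := Finset.exists_mem_ne hN i
      have hw : x w < 0 := by simpa using hwN
      have := isolated_of_two_pos G (-x) hxneg hmaxneg i w (Ne.symm hwi)
        (by simpa using hneg) (by simpa using hw)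
      simpa [quadForm_neg] using this
    · have hiP : i ∈ univ.filter fun k => 0 < x k := by simp [hpos]
      obtain ⟨w, hwP, hwi⟩ := Finset.exists_mem_ne hP i
      have hw : 0 < x w := by simpa using hwP
      exact isolated_of_two_pos G x hx hmax i w (Ne.symm hwi) hpos hw
  -- hence quadForm G x = 0
  have hq0 : quadForm G x = 0 := by
    unfold quadForm
    rw [Finset.sum_eq_zero, zero_div]
    intro i _
    refine Finset.sum_eq_zero fun j _ => ?_
    by_cases hadj : G.Adj i j
    · have hxi : x i = 0 := by
        by_contra h; exact hiso i h j hadj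
      have hxj : x j = 0 := by
        by_contra h; exact hiso j h i hadj.symm
      simp [hadj, hxi, hxj]
    · simp [hadj]
  -- construct a better vector from an edge
  obtain ⟨a, b, hab⟩ := hE
  have hane : a ≠ b := hab.ne
  set y : Fin n → ℝ := fun i => if i = a then 1/2 else if i = b then -(1/2) else 0 with hy
  have hya : y a = 1/2 := by simp [hy]
  have hyb : y b = -(1/2) := by simp [hy, Ne.symm hane]
  have hyn : pNorm 1 y = 1 := by
    rw [pNorm_one_eq]
    have : ∀ i, |y i| = (if i = a then (1:ℝ)/2 else 0) + (if i = b then 1/2 else 0) := by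
      intro i
      by_cases h1 : i = a
      · subst h1; simp [hy, hane]
      · by_cases h2 : i = b
        · have hba : b ≠ a := Ne.symm hane
          simp [hy, h1, h2, hba]
        · simp [hy, h1, h2]
    simp_rw [this, Finset.sum_add_distrib]
    norm_num
  have hyq : (1:ℝ) ≤ quadForm G y := by
    unfold quadForm
    rw [le_div_iff₀ (by norm_num : (0:ℝ) < 2)]
    have hterm : ∀ i k : Fin n, 0 ≤ (if G.Adj i k then (y i - y k) ^ 2 else 0) := by
      intro i k; split <;> positivity
    have hab' : (if G.Adj a b then (y a - y b) ^ 2 else 0) = 1 := by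
      rw [if_pos hab, hya, hyb]; norm_num
    have hba' : (if G.Adj b a then (y b - y a) ^ 2 else 0) = 1 := by
      rw [if_pos hab.symm, hya, hyb]; norm_num
    have h1 : (1:ℝ) ≤ ∑ k, (if G.Adj a k then (y a - y k) ^ 2 else 0) := by
      calc (1:ℝ) = (if G.Adj a b then (y a - y b) ^ 2 else 0) := hab'.symm
      _ ≤ _ := Finset.single_le_sum (fun k _ => hterm a k) (mem_univ b)
    have h2 : (1:ℝ) ≤ ∑ k, (if G.Adj b k then (y b - y k) ^ 2 else 0) := by
      calc (1:ℝ) = (if G.Adj b a then (y b - y a) ^ 2 else 0) := hba'.symm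
      _ ≤ _ := Finset.single_le_sum (fun k _ => hterm b k) (mem_univ a)
    calc (1:ℝ) * 2 = 1 + 1 := by ring
    _ ≤ (∑ k, (if G.Adj a k then (y a - y k) ^ 2 else 0))
        + ∑ k, (if G.Adj b k then (y b - y k) ^ 2 else 0) := add_le_add h1 h2
    _ = ∑ i ∈ ({a, b} : Finset (Fin n)), ∑ k, (if G.Adj i k then (y i - y k) ^ 2 else 0) := by
        rw [Finset.sum_pair hane]
    _ ≤ _ := Finset.sum_le_sum_of_subset_of_nonneg (Finset.subset_univ _)
        (fun i _ _ => Finset.sum_nonneg fun k _ => hterm i k)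
  have := hmax y hyn
  rw [hq0] at this
  linarith
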